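/- Let φ : ℝ → ℝ be differentiable with φ' differentiable at δ := a/b − 1, where a ∈ ℝ and b > 0. Then the mixed second partial derivative of D(a,b) := φ(a/b − 1)·b, namely the derivative at a of the map s ↦ (d/dt)|_{t=b} [φ(s/t − 1)·t], equals −(δ + 1)·φ''(δ)/b, i.e., equals −A'(δ)/b where A(δ) := (δ + 1)·φ'(δ) − φ(δ). -/

import Mathlib

/-- The mixed second partial derivative of `D(a,b) = φ(a/b − 1)·b` equals
`−(δ+1)φ''(δ)/b = −A'(δ)/b` with `δ = a/b − 1`. -/
theorem stmt_11 (φ : ℝ → ℝ) (hφ : Differentiable ℝ φ) (a b : ℝ) (hb : 0 < b)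
    (h2 : DifferentiableAt ℝ (deriv φ) (a / b - 1)) :
    deriv (fun s => deriv (fun t => φ (s / t - 1) * t) b) a
      = -((a / b - 1 + 1) * deriv (deriv φ) (a / b - 1)) / b := by
  have hb' : b ≠ 0 := ne_of_gt hb
  have key : (fun s => deriv (fun t => φ (s / t - 1) * t) b)
      = fun s => deriv φ (s / b - 1) * (-(s / b ^ 2)) * b + φ (s / b - 1) := by
    funext s
    have h1 : HasDerivAt (fun t : ℝ => s / t - 1) ((0 * b - s * 1) / b ^ 2) b :=
      ((hasDerivAt_const b s).div (hasDerivAt_id b) hb').sub_const 1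
    have h1' : HasDerivAt (fun t : ℝ => s / t - 1) (-(s / b ^ 2)) b := by
      convert h1 using 1; ring
    have hc : HasDerivAt (fun t => φ (s / t - 1))
        (deriv φ (s / b - 1) * (-(s / b ^ 2))) b :=
      (hφ (s / b - 1)).hasDerivAt.comp b h1'
    have hm : HasDerivAt (fun t => φ (s / t - 1) * t)
        (deriv φ (s / b - 1) * (-(s / b ^ 2)) * b + φ (s / b - 1) * 1) b :=
      hc.mul (hasDerivAt_id b)
    simpa using hm.deriv
  rw [key]
  have hlin : HasDerivAt (fun s : ℝ => s / b - 1) (1 / b) a := by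
    simpa using ((hasDerivAt_id a).div_const b).sub_const 1
  have hφ' : HasDerivAt (fun s : ℝ => deriv φ (s / b - 1))
      (deriv (deriv φ) (a / b - 1) * (1 / b)) a :=
    by have := HasDerivAt.comp a h2.hasDerivAt hlin; exact this
  have hsq : HasDerivAt (fun s : ℝ => -(s / b ^ 2)) (-(1 / b ^ 2)) a := by
    simpa using (((hasDerivAt_id a).div_const (b ^ 2)).fun_neg)
  have hφa : HasDerivAt (fun s : ℝ => φ (s / b - 1))
      (deriv φ (a / b - 1) * (1 / b)) a :=
    (hφ (a / b - 1)).hasDerivAt.comp a hlin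
  have hfull : HasDerivAt
      (fun s : ℝ => deriv φ (s / b - 1) * (-(s / b ^ 2)) * b + φ (s / b - 1))
      ((deriv (deriv φ) (a / b - 1) * (1 / b) * (-(a / b ^ 2))
        + deriv φ (a / b - 1) * (-(1 / b ^ 2))) * b
        + deriv φ (a / b - 1) * (1 / b)) a :=
    ((hφ'.mul hsq).mul_const b).add hφa
  rw [hfull.deriv]
  field_simp
  ring
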